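/- Let a be a real number with 1/2 < a < 1. Then there exists a constant C > 0 (depending only on a) such that for every ε ∈ (0, 1/2) and every arc I of the circle (equivalently every interval of polar angles) one has ∑ ‖ξ‖^{-a} ≤ C·( ε^{a−2}·|I| + ε^{a−1}·log(1/ε) + ε^{a−1}·|I|^{-1} ), where the sum runs over primitive lattice vectors ξ ∈ ℤ² with 0 < ‖ξ‖ ≤ 1/(2ε) whose polar angle lies in I, and |I| denotes the length of the arc I. -/

import Mathlib

/-- The Euclidean norm of a lattice vector `ξ = (p,q) ∈ ℤ²`. -/
noncomputable def znorm (ξ : ℤ × ℤ) : ℝ := Real.sqrt ((ξ.1 : ℝ) ^ 2 + (ξ.2 : ℝ) ^ 2)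

/-- A primitive lattice vector: nonzero with coprime coordinates. -/
def IsPrimitive (ξ : ℤ × ℤ) : Prop := ξ ≠ 0 ∧ Int.gcd ξ.1 ξ.2 = 1


lemma znorm_nonneg (ξ : ℤ × ℤ) : 0 ≤ znorm ξ := Real.sqrt_nonneg _

lemma one_le_sq_sum {ξ : ℤ × ℤ} (h : ξ ≠ 0) : 1 ≤ (ξ.1 : ℝ) ^ 2 + (ξ.2 : ℝ) ^ 2 := by
  have h1 : ξ.1 ≠ 0 ∨ ξ.2 ≠ 0 := by
    by_contra hc
    push_neg at hc
    exact h (Prod.ext hc.1 hc.2)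
  have : (1 : ℤ) ≤ ξ.1 ^ 2 + ξ.2 ^ 2 := by
    rcases h1 with h1 | h1
    · have := Int.one_le_abs h1
      nlinarith [sq_abs ξ.1, sq_nonneg ξ.2, sq_nonneg |ξ.1|]
    · have := Int.one_le_abs h1
      nlinarith [sq_abs ξ.2, sq_nonneg ξ.1, sq_nonneg |ξ.2|]
  exact_mod_cast this

lemma one_le_znorm {ξ : ℤ × ℤ} (h : ξ ≠ 0) : 1 ≤ znorm ξ := by
  calc (1:ℝ) = Real.sqrt 1 := by simp
  _ ≤ znorm ξ := Real.sqrt_le_sqrt (one_le_sq_sum h)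

lemma abs_fst_le_znorm (ξ : ℤ × ℤ) : |(ξ.1 : ℝ)| ≤ znorm ξ := by
  rw [← Real.sqrt_sq_eq_abs]
  exact Real.sqrt_le_sqrt (by nlinarith [sq_nonneg ((ξ.2:ℝ))])

lemma abs_snd_le_znorm (ξ : ℤ × ℤ) : |(ξ.2 : ℝ)| ≤ znorm ξ := by
  rw [← Real.sqrt_sq_eq_abs]
  exact Real.sqrt_le_sqrt (by nlinarith [sq_nonneg ((ξ.1:ℝ))])

/-- The sector membership predicate. -/
def InSector (β w r : ℝ) (ξ : ℤ × ℤ) : Prop :=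
  ξ ≠ 0 ∧ znorm ξ ≤ r ∧ ∃ θ : ℝ, β ≤ θ ∧ θ ≤ β + w ∧
    (ξ.1 : ℝ) = znorm ξ * Real.cos θ ∧ (ξ.2 : ℝ) = znorm ξ * Real.sin θ

/-- Counting lemma: lattice points in a sector of radius r and angular width w. -/
lemma count_sector (β w r : ℝ) (hw : 0 < w) (hr : 0 ≤ r) (F : Finset (ℤ × ℤ))
    (hF : ∀ ξ ∈ F, InSector β w r ξ) :
    (F.card : ℝ) ≤ (2 * r + 1) * (2 * r * w + 1) := by
  set u : ℤ × ℤ → ℝ := fun ξ => (ξ.1 : ℝ) * Real.cos β + (ξ.2 : ℝ) * Real.sin β with hu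
  set v : ℤ × ℤ → ℝ := fun ξ => -(ξ.1 : ℝ) * Real.sin β + (ξ.2 : ℝ) * Real.cos β with hv
  rcases le_or_gt w 1 with hw1 | hw1
  · -- narrow case: rotated-frame pigeonhole
    have hmem : ∀ ξ ∈ F, u ξ ∈ Set.Icc 0 r ∧ v ξ ∈ Set.Icc 0 (r * w) := by
      intro ξ hξ
      obtain ⟨hne, hle, θ, hθ1, hθ2, hx, hy⟩ := hF ξ hξ
      have hn0 : 0 ≤ znorm ξ := znorm_nonneg ξ
      have hδ1 : 0 ≤ θ - β := by linarith
      have hδ2 : θ - β ≤ w := by linarith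
      have hcos : u ξ = znorm ξ * Real.cos (θ - β) := by
        rw [Real.cos_sub]; simp only [hu, hx, hy]; ring
      have hsin : v ξ = znorm ξ * Real.sin (θ - β) := by
        rw [Real.sin_sub]; simp only [hv, hx, hy]; ring
      have hc0 : 0 ≤ Real.cos (θ - β) :=
        Real.cos_nonneg_of_mem_Icc ⟨by nlinarith [Real.pi_gt_three], by nlinarith [Real.pi_gt_three]⟩
      have hc1 : Real.cos (θ - β) ≤ 1 := Real.cos_le_one _
      have hs0 : 0 ≤ Real.sin (θ - β) :=
        Real.sin_nonneg_of_nonneg_of_le_pi hδ1 (by nlinarith [Real.pi_gt_three])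
      have hsw : Real.sin (θ - β) ≤ w := le_trans (Real.sin_le hδ1) hδ2
      constructor
      · rw [hcos]
        exact ⟨by positivity, by nlinarith⟩
      · rw [hsin]
        exact ⟨by positivity, by nlinarith⟩
    classical
    set G : Finset (ℤ × ℤ) := Finset.Icc 0 ⌊2 * r⌋ ×ˢ Finset.Icc 0 ⌊2 * (r * w)⌋ with hG
    have hcard : F.card ≤ G.card := by
      apply Finset.card_le_card_of_injOn (fun ξ => (⌊2 * u ξ⌋, ⌊2 * v ξ⌋))
      · intro ξ hξ
        obtain ⟨⟨hu0, hur⟩, ⟨hv0, hvr⟩⟩ := hmem ξ hξ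
        simp only [hG, Finset.mem_coe, Finset.mem_product, Finset.mem_Icc]
        constructor
        · exact ⟨by positivity, Int.floor_le_floor (by linarith)⟩
        · exact ⟨by positivity, Int.floor_le_floor (by linarith)⟩
      · intro ξ hξ ξ' hξ' heq
        by_contra hne
        have hδ : (ξ.1 - ξ'.1 : ℝ) ^ 2 + (ξ.2 - ξ'.2 : ℝ) ^ 2 < 1 := by
          have h1 : |2 * u ξ - 2 * u ξ'| < 1 :=
            Int.abs_sub_lt_one_of_floor_eq_floor (congrArg Prod.fst heq)
          have h2 : |2 * v ξ - 2 * v ξ'| < 1 :=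
            Int.abs_sub_lt_one_of_floor_eq_floor (congrArg Prod.snd heq)
          rw [abs_lt] at h1 h2
          simp only [hu, hv] at h1 h2
          nlinarith [Real.sin_sq_add_cos_sq β]
        have hne' : (ξ.1 - ξ'.1, ξ.2 - ξ'.2) ≠ ((0:ℤ), (0:ℤ)) := by
          intro hc
          apply hne
          rw [Prod.mk.injEq] at hc
          exact Prod.ext (by omega) (by omega)
        have h1 := one_le_sq_sum hne'
        push_cast at h1
        linarith
    have hGcard : (G.card : ℝ) ≤ (2 * r + 1) * (2 * r * w + 1) := by
      have h1 : (0:ℤ) ≤ ⌊2 * r⌋ := by positivity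
      have h2 : (0:ℤ) ≤ ⌊2 * (r * w)⌋ := by positivity
      rw [hG, Finset.card_product, Int.card_Icc, Int.card_Icc]
      have e1 : ((⌊2 * r⌋ + 1 - 0).toNat : ℝ) = (⌊2 * r⌋ : ℝ) + 1 := by
        have h' : ((⌊2 * r⌋ + 1 - 0).toNat : ℤ) = ⌊2 * r⌋ + 1 := by omega
        exact_mod_cast h'
      have e2 : ((⌊2 * (r * w)⌋ + 1 - 0).toNat : ℝ) = (⌊2 * (r * w)⌋ : ℝ) + 1 := by
        have h' : ((⌊2 * (r * w)⌋ + 1 - 0).toNat : ℤ) = ⌊2 * (r * w)⌋ + 1 := by omega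
        exact_mod_cast h'
      push_cast [e1, e2]
      have f1 := Int.floor_le (2 * r)
      have f2 := Int.floor_le (2 * (r * w))
      have hb1 : (0:ℝ) ≤ (⌊2 * r⌋:ℝ) + 1 := by exact_mod_cast (by omega : (0:ℤ) ≤ ⌊2*r⌋ + 1)
      have hb2 : (0:ℝ) ≤ (⌊2 * (r*w)⌋:ℝ) + 1 := by exact_mod_cast (by omega : (0:ℤ) ≤ ⌊2*(r*w)⌋ + 1)
      nlinarith
    calc (F.card : ℝ) ≤ (G.card : ℝ) := by exact_mod_cast hcard
    _ ≤ _ := hGcard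
  · -- wide case: trivial box count
    classical
    set G : Finset (ℤ × ℤ) := Finset.Icc (-⌊r⌋) ⌊r⌋ ×ˢ Finset.Icc (-⌊r⌋) ⌊r⌋ with hG
    have hcard : F.card ≤ G.card := by
      apply Finset.card_le_card_of_injOn id
      · intro ξ hξ
        obtain ⟨hne, hle, _⟩ := hF ξ hξ
        have h1 := abs_fst_le_znorm ξ
        have h2 := abs_snd_le_znorm ξ
        simp only [hG, id, Finset.mem_coe, Finset.mem_product, Finset.mem_Icc]
        rw [abs_le] at h1 h2
        have g1 : (-ξ.1 : ℤ) ≤ ⌊r⌋ := Int.le_floor.mpr (by push_cast; linarith)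
        have g2 : (ξ.1 : ℤ) ≤ ⌊r⌋ := Int.le_floor.mpr (by linarith)
        have g3 : (-ξ.2 : ℤ) ≤ ⌊r⌋ := Int.le_floor.mpr (by push_cast; linarith)
        have g4 : (ξ.2 : ℤ) ≤ ⌊r⌋ := Int.le_floor.mpr (by linarith)
        exact ⟨⟨by omega, g2⟩, ⟨by omega, g4⟩⟩
      · exact Function.injective_id.injOn
    have hGcard : (G.card : ℝ) ≤ (2 * r + 1) * (2 * r + 1) := by
      have h1 : (0:ℤ) ≤ ⌊r⌋ := by positivity
      rw [hG, Finset.card_product, Int.card_Icc]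
      have e1 : ((⌊r⌋ + 1 - -⌊r⌋).toNat : ℝ) = 2 * (⌊r⌋ : ℝ) + 1 := by
        have h' : ((⌊r⌋ + 1 - -⌊r⌋).toNat : ℤ) = 2 * ⌊r⌋ + 1 := by omega
        exact_mod_cast h'
      push_cast [e1]
      nlinarith [Int.floor_le r, (by exact_mod_cast h1 : (0:ℝ) ≤ (⌊r⌋:ℝ))]
    have hle2 : (2 * r + 1) * (2 * r + 1) ≤ (2 * r + 1) * (2 * r * w + 1) := by
      apply mul_le_mul_of_nonneg_left _ (by linarith)
      nlinarith
    calc (F.card : ℝ) ≤ (G.card : ℝ) := by exact_mod_cast hcard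
    _ ≤ _ := le_trans hGcard hle2

set_option maxHeartbeats 2000000 in
/-- Lemma C.6 of the paper: for `1/2 < a < 1` there is `C > 0` (depending only on `a`)
such that for all `ε ∈ (0,1/2)` and every arc of polar angles `[β, β + w]` of length
`w > 0`, the sum of `‖ξ‖^{-a}` over primitive lattice vectors with `0 < ‖ξ‖ ≤ 1/(2ε)`
whose polar angle lies in the arc is at most
`C (ε^{a-2} w + ε^{a-1} log(1/ε) + ε^{a-1} w⁻¹)`. -/
theorem sector_sum_bound (a : ℝ) (ha1 : 1 / 2 < a) (ha2 : a < 1) :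
    ∃ C : ℝ, 0 < C ∧ ∀ ε : ℝ, 0 < ε → ε < 1 / 2 → ∀ β w : ℝ, 0 < w →
      (∑ᶠ ξ ∈ {ξ : ℤ × ℤ | IsPrimitive ξ ∧ znorm ξ ≤ 1 / (2 * ε) ∧
            ∃ θ : ℝ, β ≤ θ ∧ θ ≤ β + w ∧
              (ξ.1 : ℝ) = znorm ξ * Real.cos θ ∧ (ξ.2 : ℝ) = znorm ξ * Real.sin θ},
          znorm ξ ^ (-a)) ≤
        C * (ε ^ (a - 2) * w + ε ^ (a - 1) * Real.log (1 / ε) + ε ^ (a - 1) * w⁻¹) := by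
  classical
  set c1 : ℝ := (2:ℝ) ^ (2 - a) with hc1
  set c2 : ℝ := (2:ℝ) ^ (1 - a) with hc2
  have hc1gt : 1 < c1 := by
    rw [hc1]
    have : (2:ℝ) ^ (0:ℝ) < (2:ℝ) ^ (2 - a) :=
      Real.rpow_lt_rpow_of_exponent_lt one_lt_two (by linarith)
    simpa using this
  have hc2gt : 1 < c2 := by
    rw [hc2]
    have : (2:ℝ) ^ (0:ℝ) < (2:ℝ) ^ (1 - a) :=
      Real.rpow_lt_rpow_of_exponent_lt one_lt_two (by linarith)
    simpa using this
  have hlog2 : 0 < Real.log 2 := Real.log_pos one_lt_two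
  set A : ℝ := 20 * c1 / (c1 - 1) with hA
  set B : ℝ := 8 * c2 / ((c2 - 1) * Real.log 2) with hB
  have hApos : 0 < A := div_pos (by linarith) (by linarith)
  have hBpos : 0 < B := div_pos (by linarith) (mul_pos (by linarith) hlog2)
  refine ⟨A + B + 1, by linarith, ?_⟩
  intro ε hε hε2 β w hwpos
  set R : ℝ := 1 / (2 * ε) with hR
  have hR1 : 1 < R := by
    rw [hR, lt_div_iff₀ (by linarith)]
    linarith
  have hRpos : 0 < R := by linarith
  set M : Set (ℤ × ℤ) := {ξ : ℤ × ℤ | IsPrimitive ξ ∧ znorm ξ ≤ 1 / (2 * ε) ∧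
      ∃ θ : ℝ, β ≤ θ ∧ θ ≤ β + w ∧
        (ξ.1 : ℝ) = znorm ξ * Real.cos θ ∧ (ξ.2 : ℝ) = znorm ξ * Real.sin θ} with hM
  have hMsub : M ⊆ ↑(Finset.Icc (-⌊R⌋) ⌊R⌋ ×ˢ Finset.Icc (-⌊R⌋) ⌊R⌋) := by
    intro ξ hξ
    obtain ⟨⟨hne, _⟩, hle, _⟩ := hξ
    have h1 := abs_fst_le_znorm ξ
    have h2 := abs_snd_le_znorm ξ
    rw [abs_le] at h1 h2
    simp only [Finset.coe_product, Set.mem_prod, Finset.mem_coe, Finset.mem_Icc]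
    have g1 : (-ξ.1 : ℤ) ≤ ⌊R⌋ := Int.le_floor.mpr (by push_cast; rw [hR]; linarith)
    have g2 : (ξ.1 : ℤ) ≤ ⌊R⌋ := Int.le_floor.mpr (by rw [hR]; linarith)
    have g3 : (-ξ.2 : ℤ) ≤ ⌊R⌋ := Int.le_floor.mpr (by push_cast; rw [hR]; linarith)
    have g4 : (ξ.2 : ℤ) ≤ ⌊R⌋ := Int.le_floor.mpr (by rw [hR]; linarith)
    exact ⟨⟨by omega, g2⟩, ⟨by omega, g4⟩⟩
  have hMfin : M.Finite := Set.Finite.subset (Finset.finite_toSet _) hMsub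
  have hfin : (M ∩ Function.support (fun ξ => znorm ξ ^ (-a))).Finite :=
    hMfin.subset Set.inter_subset_left
  rw [finsum_mem_eq_sum _ hfin]
  set F : Finset (ℤ × ℤ) := hfin.toFinset with hF
  have hFmem : ∀ ξ ∈ F, ξ ∈ M := by
    intro ξ hξ
    rw [hF, Set.Finite.mem_toFinset] at hξ
    exact hξ.1
  set kf : ℤ × ℤ → ℕ := fun ξ => ⌊Real.logb 2 (znorm ξ)⌋₊ with hkf
  set K : ℕ := ⌊Real.logb 2 R⌋₊ with hK
  have hmaps : ∀ ξ ∈ F, kf ξ ∈ Finset.range (K + 1) := by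
    intro ξ hξ
    obtain ⟨⟨hne, _⟩, hle, _⟩ := hFmem ξ hξ
    have h1 : Real.logb 2 (znorm ξ) ≤ Real.logb 2 R := by
      apply (Real.logb_le_logb one_lt_two (by linarith [one_le_znorm hne]) hRpos).mpr
      rw [hR]; exact hle
    rw [Finset.mem_range, Nat.lt_succ_iff]
    exact Nat.floor_mono h1
  rw [← Finset.sum_fiberwise_of_maps_to hmaps (fun ξ => znorm ξ ^ (-a))]
  have hshell : ∀ j ∈ Finset.range (K + 1),
      (∑ ξ ∈ F.filter (fun ξ => kf ξ = j), znorm ξ ^ (-a))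
        ≤ 20 * w * c1 ^ j + 8 * c2 ^ j := by
    intro j _
    set t : ℝ := (2:ℝ) ^ (j : ℝ) with ht
    have htpos : 0 < t := Real.rpow_pos_of_pos two_pos _
    have ht1 : 1 ≤ t := Real.one_le_rpow one_le_two (by positivity)
    have hel : ∀ ξ ∈ F.filter (fun ξ => kf ξ = j),
        t ≤ znorm ξ ∧ InSector β w (2 * t) ξ := by
      intro ξ hξ
      rw [Finset.mem_filter] at hξ
      obtain ⟨hξF, hj⟩ := hξ
      obtain ⟨⟨hne, _⟩, hle, hang⟩ := hFmem ξ hξF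
      have hz1 : 1 ≤ znorm ξ := one_le_znorm hne
      have hzpos : 0 < znorm ξ := by linarith
      have hlogb0 : 0 ≤ Real.logb 2 (znorm ξ) := Real.logb_nonneg one_lt_two hz1
      have hlow : t ≤ znorm ξ := by
        have h1 : (j : ℝ) ≤ Real.logb 2 (znorm ξ) := by
          rw [← hj]
          exact Nat.floor_le hlogb0
        calc t ≤ (2:ℝ) ^ Real.logb 2 (znorm ξ) :=
              Real.rpow_le_rpow_of_exponent_le one_le_two h1
        _ = znorm ξ := Real.rpow_logb two_pos (by norm_num) hzpos
      have hhigh : znorm ξ ≤ 2 * t := by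
        have h1 : Real.logb 2 (znorm ξ) < (j : ℝ) + 1 := by
          rw [← hj]
          exact Nat.lt_floor_add_one _
        have h2 : znorm ξ ≤ (2:ℝ) ^ ((j : ℝ) + 1) := by
          calc znorm ξ = (2:ℝ) ^ Real.logb 2 (znorm ξ) :=
                (Real.rpow_logb two_pos (by norm_num) hzpos).symm
          _ ≤ (2:ℝ) ^ ((j : ℝ) + 1) :=
                Real.rpow_le_rpow_of_exponent_le one_le_two (le_of_lt h1)
        have h3 : (2:ℝ) ^ ((j : ℝ) + 1) = 2 * t := by
          rw [ht, Real.rpow_add two_pos, Real.rpow_one]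
          ring
        linarith
      exact ⟨hlow, hne, hhigh, hang⟩
    have hcard : ((F.filter (fun ξ => kf ξ = j)).card : ℝ)
        ≤ (2 * (2 * t) + 1) * (2 * (2 * t) * w + 1) := by
      apply count_sector β w (2 * t) hwpos (by positivity)
      intro ξ hξ
      exact (hel ξ hξ).2
    have hterm : ∀ ξ ∈ F.filter (fun ξ => kf ξ = j),
        znorm ξ ^ (-a) ≤ t ^ (-a) := by
      intro ξ hξ
      exact Real.rpow_le_rpow_of_nonpos htpos (hel ξ hξ).1 (by linarith)
    have e1 : c1 ^ j = t ^ 2 * t ^ (-a) := by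
      have ea : c1 ^ j = (2:ℝ) ^ ((2 - a) * (j:ℝ)) := by
        rw [hc1, ← Real.rpow_natCast ((2:ℝ) ^ (2 - a)) j, ← Real.rpow_mul (by norm_num)]
      have eb : t ^ 2 = (2:ℝ) ^ ((j:ℝ) * 2) := by
        rw [ht, ← Real.rpow_natCast ((2:ℝ) ^ ((j:ℝ))) 2, ← Real.rpow_mul (by norm_num)]
        norm_num
      have ec : t ^ (-a) = (2:ℝ) ^ ((j:ℝ) * (-a)) := by
        rw [ht, ← Real.rpow_mul (by norm_num)]
      rw [ea, eb, ec, ← Real.rpow_add two_pos]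
      congr 1
      ring
    have e2 : c2 ^ j = t * t ^ (-a) := by
      have ea : c2 ^ j = (2:ℝ) ^ ((1 - a) * (j:ℝ)) := by
        rw [hc2, ← Real.rpow_natCast ((2:ℝ) ^ (1 - a)) j, ← Real.rpow_mul (by norm_num)]
      have ec : t ^ (-a) = (2:ℝ) ^ ((j:ℝ) * (-a)) := by
        rw [ht, ← Real.rpow_mul (by norm_num)]
      rw [ea, ec, ht, ← Real.rpow_add two_pos]
      congr 1
      ring
    calc (∑ ξ ∈ F.filter (fun ξ => kf ξ = j), znorm ξ ^ (-a))
        ≤ ((F.filter (fun ξ => kf ξ = j)).card : ℝ) * t ^ (-a) := by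
          have := Finset.sum_le_card_nsmul _ _ _ hterm
          rwa [nsmul_eq_mul] at this
    _ ≤ ((2 * (2 * t) + 1) * (2 * (2 * t) * w + 1)) * t ^ (-a) :=
          mul_le_mul_of_nonneg_right hcard (by positivity)
    _ ≤ (20 * t ^ 2 * w + 8 * t) * t ^ (-a) := by
          apply mul_le_mul_of_nonneg_right _ (by positivity)
          nlinarith
    _ = 20 * w * (t ^ 2 * t ^ (-a)) + 8 * (t * t ^ (-a)) := by ring
    _ = 20 * w * c1 ^ j + 8 * c2 ^ j := by rw [e1, e2]
  have hgeo : ∀ (c : ℝ), 1 < c → (∑ j ∈ Finset.range (K + 1), c ^ j)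
      ≤ c * c ^ K / (c - 1) := by
    intro c hc
    rw [geom_sum_eq (by intro h; rw [h] at hc; exact lt_irrefl 1 hc) (K + 1)]
    have h1 : c ^ (K + 1) - 1 ≤ c * c ^ K := by
      rw [pow_succ]
      nlinarith [pow_pos (by linarith : (0:ℝ) < c) K]
    gcongr
  -- geometric sums bounded via R
  have h2K : (2:ℝ) ^ (K:ℝ) ≤ R := by
    calc (2:ℝ) ^ (K:ℝ) ≤ 2 ^ Real.logb 2 R :=
          Real.rpow_le_rpow_of_exponent_le one_le_two
            (Nat.floor_le (Real.logb_nonneg one_lt_two hR1.le))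
    _ = R := Real.rpow_logb two_pos (by norm_num) hRpos
  have hRa2 : R ^ (2 - a) ≤ ε ^ (a - 2) := by
    have h1 : R ≤ ε⁻¹ := by
      rw [hR, ← one_div]
      exact one_div_le_one_div_of_le hε (by linarith)
    calc R ^ (2 - a) ≤ (ε⁻¹) ^ (2 - a) :=
          Real.rpow_le_rpow hRpos.le h1 (by linarith)
    _ = ε ^ (a - 2) := by
        rw [Real.inv_rpow hε.le, ← Real.rpow_neg hε.le]
        congr 1
        ring
  have hRa1 : R ^ (1 - a) ≤ ε ^ (a - 1) := by
    have h1 : R ≤ ε⁻¹ := by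
      rw [hR, ← one_div]
      exact one_div_le_one_div_of_le hε (by linarith)
    calc R ^ (1 - a) ≤ (ε⁻¹) ^ (1 - a) :=
          Real.rpow_le_rpow hRpos.le h1 (by linarith)
    _ = ε ^ (a - 1) := by
        rw [Real.inv_rpow hε.le, ← Real.rpow_neg hε.le]
        congr 1
        ring
  have hc1K : c1 ^ K ≤ ε ^ (a - 2) := by
    have e : c1 ^ K = ((2:ℝ) ^ (K:ℝ)) ^ (2 - a) := by
      rw [← Real.rpow_natCast c1 K, hc1, ← Real.rpow_mul (by norm_num),
        ← Real.rpow_mul (by norm_num)]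
      congr 1
      ring
    calc c1 ^ K = ((2:ℝ) ^ (K:ℝ)) ^ (2 - a) := e
    _ ≤ R ^ (2 - a) := Real.rpow_le_rpow (by positivity) h2K (by linarith)
    _ ≤ ε ^ (a - 2) := hRa2
  have hc2K : c2 ^ K ≤ ε ^ (a - 1) := by
    have e : c2 ^ K = ((2:ℝ) ^ (K:ℝ)) ^ (1 - a) := by
      rw [← Real.rpow_natCast c2 K, hc2, ← Real.rpow_mul (by norm_num),
        ← Real.rpow_mul (by norm_num)]
      congr 1
      ring
    calc c2 ^ K = ((2:ℝ) ^ (K:ℝ)) ^ (1 - a) := e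
    _ ≤ R ^ (1 - a) := Real.rpow_le_rpow (by positivity) h2K (by linarith)
    _ ≤ ε ^ (a - 1) := hRa1
  have hlogle : Real.log 2 ≤ Real.log (1 / ε) := by
    apply Real.log_le_log two_pos
    rw [le_div_iff₀ hε]
    linarith
  have hX : (0:ℝ) ≤ ε ^ (a - 2) := (Real.rpow_pos_of_pos hε _).le
  have hY : (0:ℝ) ≤ ε ^ (a - 1) := (Real.rpow_pos_of_pos hε _).le
  have hL : (0:ℝ) < Real.log (1 / ε) := lt_of_lt_of_le hlog2 hlogle
  -- assemble
  calc (∑ j ∈ Finset.range (K + 1), ∑ ξ ∈ F.filter (fun ξ => kf ξ = j), znorm ξ ^ (-a))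
      ≤ ∑ j ∈ Finset.range (K + 1), (20 * w * c1 ^ j + 8 * c2 ^ j) :=
        Finset.sum_le_sum hshell
  _ = 20 * w * (∑ j ∈ Finset.range (K + 1), c1 ^ j)
      + 8 * (∑ j ∈ Finset.range (K + 1), c2 ^ j) := by
        rw [Finset.sum_add_distrib, ← Finset.mul_sum, ← Finset.mul_sum]
  _ ≤ 20 * w * (c1 * c1 ^ K / (c1 - 1)) + 8 * (c2 * c2 ^ K / (c2 - 1)) := by
        have g1 := hgeo c1 hc1gt
        have g2 := hgeo c2 hc2gt
        have n1 : (0:ℝ) ≤ 20 * w := by linarith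
        nlinarith [mul_le_mul_of_nonneg_left g1 n1,
          mul_le_mul_of_nonneg_left g2 (by norm_num : (0:ℝ) ≤ 8)]
  _ ≤ 20 * w * (c1 * ε ^ (a - 2) / (c1 - 1)) + 8 * (c2 * ε ^ (a - 1) / (c2 - 1)) := by
        gcongr <;> linarith
  _ = A * (ε ^ (a - 2) * w) + (8 * c2 / (c2 - 1)) * ε ^ (a - 1) := by
        rw [hA]
        field_simp
  _ ≤ A * (ε ^ (a - 2) * w) + B * (ε ^ (a - 1) * Real.log (1 / ε)) := by
        have e : (8 * c2 / (c2 - 1)) * ε ^ (a - 1)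
            = B * (ε ^ (a - 1) * Real.log 2) := by
          rw [hB]
          rw [div_mul_eq_mul_div, div_mul_eq_mul_div, div_eq_div_iff
            (ne_of_gt (by linarith : (0:ℝ) < c2 - 1))
            (ne_of_gt (mul_pos (by linarith : (0:ℝ) < c2 - 1) hlog2))]
          ring
        rw [e]
        have : B * (ε ^ (a - 1) * Real.log 2) ≤ B * (ε ^ (a - 1) * Real.log (1 / ε)) := by
          gcongr
        linarith
  _ ≤ (A + B + 1) * (ε ^ (a - 2) * w + ε ^ (a - 1) * Real.log (1 / ε)
        + ε ^ (a - 1) * w⁻¹) := by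
        have hS1 : (0:ℝ) ≤ ε ^ (a - 2) * w := by positivity
        have hS2 : (0:ℝ) ≤ ε ^ (a - 1) * Real.log (1 / ε) := by positivity
        have hS3 : (0:ℝ) ≤ ε ^ (a - 1) * w⁻¹ := by positivity
        nlinarith [mul_nonneg hApos.le hS2, mul_nonneg hApos.le hS3,
          mul_nonneg hBpos.le hS1, mul_nonneg hBpos.le hS3]
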